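/- If A is strictly decreasing, B is strictly increasing, and a_i > b_j for all i,j, then the Cauchy determinant det(1/(a_i - b_j))_{i,j=1}^n equals ∏_{i<j}(a_i - a_j) · ∏_{i<j}(b_j - b_i) · ∏_{i,j} 1/(a_i - b_j), and in particular is strictly positive. -/
import Mathlib


open Finset Polynomial Matrix

-- pair product vs nested Ioi product
lemma pairProd {n : ℕ} (g : Fin n → Fin n → ℝ) :
    ∏ p ∈ univ.filter (fun p : Fin n × Fin n => p.1 < p.2), g p.1 p.2 =
      ∏ i, ∏ j ∈ Finset.Ioi i, g i j := by
  rw [Finset.prod_filter, Fintype.prod_prod_type]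
  refine Finset.prod_congr rfl fun i _ => ?_
  rw [← Finset.prod_filter, Finset.filter_lt_eq_Ioi]

-- product over off-diagonal pairs splits
lemma offdiag_prod {n : ℕ} (g : Fin n → Fin n → ℝ) :
    ∏ j, ∏ k ∈ univ.erase j, g j k =
      (∏ p ∈ univ.filter (fun p : Fin n × Fin n => p.1 < p.2), g p.1 p.2) *
      (∏ p ∈ univ.filter (fun p : Fin n × Fin n => p.1 < p.2), g p.2 p.1) := by
  have h1 : ∏ j, ∏ k ∈ univ.erase j, g j k
      = ∏ p ∈ (univ : Finset (Fin n × Fin n)).filter (fun p => p.1 ≠ p.2), g p.1 p.2 := by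
    rw [Finset.prod_filter, Fintype.prod_prod_type]
    refine Finset.prod_congr rfl fun j _ => ?_
    rw [← Finset.prod_filter]
    congr 1
    ext k; simp [eq_comm, ne_comm, Ne]
  have h2 : (univ : Finset (Fin n × Fin n)).filter (fun p => p.1 ≠ p.2)
      = univ.filter (fun p : Fin n × Fin n => p.1 < p.2) ∪
        univ.filter (fun p : Fin n × Fin n => p.2 < p.1) := by
    rw [← Finset.filter_or]
    congr 1; ext p; exact ne_iff_lt_or_gt
  have hdisj : Disjoint (univ.filter (fun p : Fin n × Fin n => p.1 < p.2))
      (univ.filter (fun p : Fin n × Fin n => p.2 < p.1)) := by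
    rw [Finset.disjoint_filter]
    intro p _ h h'; exact absurd h' (not_lt_of_gt h)
  rw [h1, h2, Finset.prod_union hdisj]
  congr 1
  exact Finset.prod_nbij' Prod.swap Prod.swap
    (by intro p hp; simp_all) (by intro p hp; simp_all)
    (by intro p _; rfl) (by intro p _; rfl) (by intro p _; rfl)


lemma cauchy_det_formula {n : ℕ} (a b : Fin n → ℝ) (hbinj : Function.Injective b)
    (hab : ∀ i j : Fin n, a i - b j ≠ 0) :
    (Matrix.of fun i j : Fin n => (a i - b j)⁻¹).det =
      (∏ p ∈ univ.filter (fun p : Fin n × Fin n => p.1 < p.2), (a p.1 - a p.2)) *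
      (∏ p ∈ univ.filter (fun p : Fin n × Fin n => p.1 < p.2), (b p.2 - b p.1)) *
      ∏ i : Fin n, ∏ j : Fin n, (a i - b j)⁻¹ := by
  set f : Fin n → ℝ[X] := fun j => ∏ k ∈ univ.erase j, (X - C (b k)) with hf
  have hfdeg : ∀ j : Fin n, (f j).natDegree < n := by
    intro j
    have : (f j).natDegree = ∑ k ∈ univ.erase j, (X - C (b k)).natDegree :=
      Polynomial.natDegree_prod _ _ (fun k _ => X_sub_C_ne_zero _)
    simp only [natDegree_X_sub_C, Finset.sum_const, smul_eq_mul, mul_one] at this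
    rw [this, Finset.card_erase_of_mem (mem_univ j), Finset.card_univ, Fintype.card_fin]
    exact Nat.sub_lt (Fin.pos j) one_pos
  set Cm : Matrix (Fin n) (Fin n) ℝ := Matrix.of (fun k j => (f j).coeff k) with hCm
  have hmul : ∀ (v : Fin n → ℝ) (i j : Fin n),
      (Matrix.vandermonde v * Cm) i j = (f j).eval (v i) := by
    intro v i j
    rw [Matrix.mul_apply, eval_eq_sum_range' (hfdeg j), ← Fin.sum_univ_eq_sum_range]
    exact Finset.sum_congr rfl fun k _ => by
      simp [Matrix.vandermonde, hCm, mul_comm]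
  have hfeval : ∀ (x : ℝ) (j : Fin n), (f j).eval x = ∏ k ∈ univ.erase j, (x - b k) := by
    intro x j; simp [hf, eval_prod]
  have hBdiag : Matrix.vandermonde b * Cm =
      Matrix.diagonal (fun j => ∏ k ∈ univ.erase j, (b j - b k)) := by
    ext i j
    rw [hmul, hfeval]
    by_cases h : i = j
    · subst h; simp
    · rw [Matrix.diagonal_apply_ne _ h]
      exact Finset.prod_eq_zero (Finset.mem_erase.2 ⟨h, mem_univ i⟩) (by ring)
  have hvb : (Matrix.vandermonde b).det =
      ∏ p ∈ univ.filter (fun p : Fin n × Fin n => p.1 < p.2), (b p.2 - b p.1) := by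
    rw [Matrix.det_vandermonde, pairProd (fun i j => b j - b i)]
  have hvbne : (∏ p ∈ univ.filter (fun p : Fin n × Fin n => p.1 < p.2), (b p.2 - b p.1)) ≠ 0 := by
    refine Finset.prod_ne_zero_iff.2 fun p hp => sub_ne_zero.2 fun h => ?_
    exact absurd (hbinj h) (ne_of_gt (Finset.mem_filter.1 hp).2)
  have hdetC : Cm.det = ∏ p ∈ univ.filter (fun p : Fin n × Fin n => p.1 < p.2), (b p.1 - b p.2) := by
    have h1 : (Matrix.vandermonde b).det * Cm.det = ∏ j, ∏ k ∈ univ.erase j, (b j - b k) := by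
      rw [← Matrix.det_mul, hBdiag, Matrix.det_diagonal]
    rw [offdiag_prod (fun j k => b j - b k), hvb] at h1
    exact mul_left_cancel₀ hvbne (by rw [h1]; ring)
  -- A side
  set d : Fin n → ℝ := fun i => ∏ k, (a i - b k) with hd
  have hAdiag : Matrix.vandermonde a * Cm =
      Matrix.diagonal d * Matrix.of (fun i j : Fin n => (a i - b j)⁻¹) := by
    ext i j
    rw [hmul, hfeval, Matrix.diagonal_mul]
    show ∏ k ∈ univ.erase j, (a i - b k) = (∏ k, (a i - b k)) * (a i - b j)⁻¹
    rw [← Finset.mul_prod_erase univ (fun k => a i - b k) (mem_univ j),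
      mul_comm (a i - b j), mul_assoc, mul_inv_cancel₀ (hab i j), mul_one]
  have hdprod : ∏ i, d i = ∏ i : Fin n, ∏ j : Fin n, (a i - b j) := rfl
  have hdne : (∏ i, d i) ≠ 0 :=
    Finset.prod_ne_zero_iff.2 fun i _ => Finset.prod_ne_zero_iff.2 fun j _ => hab i j
  have hdetA : (∏ i, d i) * (Matrix.of fun i j : Fin n => (a i - b j)⁻¹).det =
      (Matrix.vandermonde a).det * Cm.det := by
    rw [← Matrix.det_diagonal (d := d), ← Matrix.det_mul, ← hAdiag, Matrix.det_mul]
  have hva : (Matrix.vandermonde a).det =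
      ∏ p ∈ univ.filter (fun p : Fin n × Fin n => p.1 < p.2), (a p.2 - a p.1) := by
    rw [Matrix.det_vandermonde, pairProd (fun i j => a j - a i)]
  have hinv : (∏ i, d i)⁻¹ = ∏ i : Fin n, ∏ j : Fin n, (a i - b j)⁻¹ := by
    rw [hdprod]
    push_cast [← Finset.prod_inv_distrib]
    rfl
  have hsign : (∏ p ∈ univ.filter (fun p : Fin n × Fin n => p.1 < p.2), (a p.2 - a p.1)) *
      (∏ p ∈ univ.filter (fun p : Fin n × Fin n => p.1 < p.2), (b p.1 - b p.2)) =
      (∏ p ∈ univ.filter (fun p : Fin n × Fin n => p.1 < p.2), (a p.1 - a p.2)) *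
      (∏ p ∈ univ.filter (fun p : Fin n × Fin n => p.1 < p.2), (b p.2 - b p.1)) := by
    rw [← Finset.prod_mul_distrib, ← Finset.prod_mul_distrib]
    exact Finset.prod_congr rfl fun p _ => by ring
  have key : (Matrix.of fun i j : Fin n => (a i - b j)⁻¹).det =
      (Matrix.vandermonde a).det * Cm.det * (∏ i, d i)⁻¹ := by
    rw [← hdetA, mul_comm (∏ i, d i), mul_assoc, mul_inv_cancel₀ hdne, mul_one]
  rw [key, hinv, hva, hdetC, hsign]


/-- The Cauchy determinant formula, and its positivity for `A` strictly decreasing,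
`B` strictly increasing with `a i > b j` for all `i, j`. -/
theorem stmt3 (n : ℕ) (a b : Fin n → ℝ)
    (ha : StrictAnti a) (hb : StrictMono b)
    (hab : ∀ i j : Fin n, b j < a i) :
    (Matrix.of fun i j : Fin n => (a i - b j)⁻¹).det =
      (∏ p ∈ Finset.univ.filter (fun p : Fin n × Fin n => p.1 < p.2), (a p.1 - a p.2)) *
      (∏ p ∈ Finset.univ.filter (fun p : Fin n × Fin n => p.1 < p.2), (b p.2 - b p.1)) *
      ∏ i : Fin n, ∏ j : Fin n, (a i - b j)⁻¹ ∧
    0 < (Matrix.of fun i j : Fin n => (a i - b j)⁻¹).det := by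
  have hab' : ∀ i j : Fin n, a i - b j ≠ 0 := fun i j => sub_ne_zero.2 (ne_of_gt (hab i j))
  have hform := cauchy_det_formula a b hb.injective hab'
  refine ⟨hform, ?_⟩
  rw [hform]
  refine mul_pos (mul_pos ?_ ?_) ?_
  · exact Finset.prod_pos fun p hp => sub_pos.2 (ha (Finset.mem_filter.1 hp).2)
  · exact Finset.prod_pos fun p hp => sub_pos.2 (hb (Finset.mem_filter.1 hp).2)
  · exact Finset.prod_pos fun i _ => Finset.prod_pos fun j _ =>
      inv_pos.2 (sub_pos.2 (hab i j))
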